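/- Let K = k1/k2 ∈ E(y) be nonzero differential-reduced, and let r and r′ both be residual forms (r = q/b + v/k2 and r′ = q′/b′ + v′/k2 with b, b′ squarefree, coprime to k2, deg q < deg b, deg q′ < deg b′, v, v′ ∈ N_K) of the same rational function f w.r.t. K, meaning f = D(g) + K·g + r = D(g′) + K·g′ + r′ for some g, g′ ∈ E(y). Then r = r′. -/

import Mathlib

open Polynomial

/-- `K = k1/k2` is differential-reduced: `gcd(k2, k1 - i·D(k2)) = 1` for all integers `i`. -/
def DiffReduced {E : Type*} [Field E] (k1 k2 : E[X]) : Prop :=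
  ∀ i : ℤ, IsCoprime k2 (k1 - (i : E[X]) * derivative k2)

/-- The derivation `d/dy` on the field of rational functions `E(y)`. -/
noncomputable def Dr {E : Type*} [Field E] (f : RatFunc E) : RatFunc E :=
  (algebraMap E[X] (RatFunc E) (derivative f.num) * algebraMap E[X] (RatFunc E) f.denom -
      algebraMap E[X] (RatFunc E) f.num * algebraMap E[X] (RatFunc E) (derivative f.denom)) /
    (algebraMap E[X] (RatFunc E) f.denom) ^ 2

/-- The subspace `M_K = { k2·D(w) + k1·w : w ∈ E[y] }` for polynomial reduction. -/
noncomputable def MK {E : Type*} [Field E] (k1 k2 : E[X]) : Submodule E E[X] :=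
  LinearMap.range
    (LinearMap.mulLeft E k2 ∘ₗ (derivative : E[X] →ₗ[E] E[X]) + LinearMap.mulLeft E k1)

section Aux

variable {E : Type*} [Field E]

local notation "ι" => algebraMap E[X] (RatFunc E)

lemma prime_not_dvd_derivative [CharZero E] {π : E[X]} (hπ : Prime π) : ¬ π ∣ derivative π := by
  have h0 : π ≠ 0 := hπ.ne_zero
  have hdeg : 0 < π.degree := degree_pos_of_irreducible hπ.irreducible
  have hD : derivative π ≠ 0 := by
    intro h
    have h1 := natDegree_eq_zero_of_derivative_eq_zero h
    rw [← natDegree_pos_iff_degree_pos] at hdeg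
    omega
  intro hdvd
  exact absurd (degree_le_of_dvd hdvd hD) (not_le.mpr (degree_derivative_lt h0))

lemma sq_not_dvd {b π : E[X]} (hb : Squarefree b) (hπ : Prime π) : ¬ π^2 ∣ b := by
  intro h
  exact hπ.not_unit (hb π (by rwa [← sq]))

lemma dr_def (x : RatFunc E) : Dr x =
    (ι (derivative x.num) * ι x.denom - ι x.num * ι (derivative x.denom)) / (ι x.denom)^2 := rfl

lemma dr_eq (p q : E[X]) (hq : q ≠ 0) :
    Dr (ι p / ι q) = (ι (derivative p) * ι q - ι p * ι (derivative q)) / (ι q)^2 := by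
  set x : RatFunc E := ι p / ι q with hx
  have hd0 : x.denom ≠ 0 := x.denom_ne_zero
  have hcross : x.num * q = p * x.denom := by
    apply RatFunc.algebraMap_injective E
    simp only [map_mul]
    rw [← div_eq_div_iff (RatFunc.algebraMap_ne_zero hd0) (RatFunc.algebraMap_ne_zero hq)]
    rw [x.num_div_denom]
  have hderiv : derivative x.num * q + x.num * derivative q
      = derivative p * x.denom + p * derivative x.denom := by
    have := congrArg derivative hcross
    rwa [derivative_mul, derivative_mul] at this
  have hpoly : (derivative x.num * x.denom - x.num * derivative x.denom) * q^2
      = (derivative p * q - p * derivative q) * x.denom^2 := by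
    linear_combination (q * x.denom) * hderiv -
      (derivative x.denom * q + derivative q * x.denom) * hcross
  rw [dr_def]
  rw [div_eq_div_iff (pow_ne_zero 2 (RatFunc.algebraMap_ne_zero hd0))
    (pow_ne_zero 2 (RatFunc.algebraMap_ne_zero hq))]
  rw [← map_pow, ← map_pow, ← map_mul, ← map_mul, ← map_mul, ← map_mul, ← map_sub, ← map_sub,
    ← map_mul, ← map_mul]
  exact congrArg _ hpoly

lemma dr_add (x y : RatFunc E) : Dr (x + y) = Dr x + Dr y := by
  have hdx : (x.denom : E[X]) ≠ 0 := x.denom_ne_zero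
  have hdy : (y.denom : E[X]) ≠ 0 := y.denom_ne_zero
  have h1 : ι x.denom ≠ 0 := RatFunc.algebraMap_ne_zero hdx
  have h2 : ι y.denom ≠ 0 := RatFunc.algebraMap_ne_zero hdy
  have hxy : x + y = ι (x.num * y.denom + y.num * x.denom) / ι (x.denom * y.denom) := by
    rw [eq_div_iff (RatFunc.algebraMap_ne_zero (mul_ne_zero hdx hdy))]
    rw [map_mul, map_add, map_mul, map_mul]
    have ex : ι x.num = x * ι x.denom := (div_eq_iff h1).mp x.num_div_denom
    have ey : ι y.num = y * ι y.denom := (div_eq_iff h2).mp y.num_div_denom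
    linear_combination (-(ι y.denom)) * ex + (-(ι x.denom)) * ey
  rw [hxy, dr_eq _ _ (mul_ne_zero hdx hdy), dr_def x, dr_def y]
  simp only [derivative_add, derivative_mul, map_add, map_mul]
  field_simp
  ring

set_option maxHeartbeats 1000000 in
lemma key_no_factor [CharZero E] {k1 k2 b b' n d C : E[X]}
    (hk20 : k2 ≠ 0)
    (hcop : IsCoprime k1 k2) (hdr : DiffReduced k1 k2)
    (hb : Squarefree b) (hb' : Squarefree b')
    (hbk : IsCoprime b k2) (hbk' : IsCoprime b' k2)
    (hnd : IsCoprime n d) (hd0 : d ≠ 0)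
    (hCd : ∀ π : E[X], Prime π → π ∣ b → π ∣ b' → π ∣ C)
    (hstar : b*b'*(k2*(derivative n * d - n * derivative d) + k1*n*d) = C * d^2)
    {π : E[X]} (hπ : Prime π) : ¬ π ∣ d := by
  intro hπd
  have hn : ¬ π ∣ n := fun h => hπ.not_unit (hnd.isUnit_of_dvd' h hπd)
  obtain ⟨e0, u, hu, hdu⟩ := WfDvdMonoid.max_power_factor hd0 hπ.irreducible
  cases e0 with
  | zero => rw [pow_zero, one_mul] at hdu; exact hu (hdu ▸ hπd)
  | succ e =>
  set t : E[X] := ((e+1 : ℕ) : E[X]) * derivative π * u + π * derivative u with ht_def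
  have hDd : derivative d = π^e * t := by
    rw [hdu, derivative_mul, derivative_pow]
    simp only [Nat.add_sub_cancel, C_eq_natCast]
    ring
  have ht : ¬ π ∣ t := by
    intro h
    have h1 : π ∣ ((e+1 : ℕ) : E[X]) * derivative π * u := by
      have h2 := dvd_sub h (dvd_mul_right π (derivative u))
      simpa [ht_def] using h2
    rcases (hπ.dvd_mul.mp h1) with h2 | h2
    · rcases hπ.dvd_mul.mp h2 with h3 | h3
      · have hne : ((e+1 : ℕ) : E[X]) ≠ 0 := by
          exact_mod_cast (Nat.cast_ne_zero (R := E[X])).mpr (Nat.succ_ne_zero e)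
        have hunit : IsUnit ((e+1 : ℕ) : E[X]) := by
          rw [← C_eq_natCast]
          exact isUnit_C.mpr (isUnit_iff_ne_zero.mpr (Nat.cast_ne_zero.mpr (Nat.succ_ne_zero e)))
        exact hπ.not_unit (isUnit_of_dvd_unit h3 hunit)
      · exact prime_not_dvd_derivative hπ h3
    · exact hu h2
  have hdvd_d : π^(e+1) ∣ d := hdu ▸ dvd_mul_right _ _
  by_cases hk2π : π ∣ k2
  · -- case π ∣ k2
    have hπb : ¬ π ∣ b := fun h => hπ.not_unit (hbk.isUnit_of_dvd' h hk2π)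
    have hπb' : ¬ π ∣ b' := fun h => hπ.not_unit (hbk'.isUnit_of_dvd' h hk2π)
    have hπk1 : ¬ π ∣ k1 := fun h => hπ.not_unit (hcop.isUnit_of_dvd' h hk2π)
    obtain ⟨m0, w, hw, hk2w⟩ := WfDvdMonoid.max_power_factor hk20 hπ.irreducible
    cases m0 with
    | zero => rw [pow_zero, one_mul] at hk2w; exact hw (hk2w ▸ hk2π)
    | succ m =>
    -- rearrangement
    have hB : b*b'*(n*(k1*d - k2*derivative d)) = C*d^2 - b*b'*(k2*(derivative n*d)) := by
      linear_combination hstar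
    have hR : π^(e+2) ∣ C*d^2 - b*b'*(k2*(derivative n*d)) := by
      apply dvd_sub
      · have h1 : π^(e+2) ∣ d^2 := by
          calc π^(e+2) ∣ π^(2*(e+1)) := pow_dvd_pow π (by omega)
          _ ∣ d^2 := by rw [mul_comm 2 (e+1), pow_mul]; exact pow_dvd_pow_of_dvd hdvd_d 2
        exact h1.mul_left C
      · have h1 : π^(e+2) ∣ k2*(derivative n*d) := by
          have h2 : π * π^(e+1) ∣ k2 * (derivative n * d) :=
            mul_dvd_mul hk2π (hdvd_d.mul_left _)
          have h3 : π^(e+2) = π * π^(e+1) := by ring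
          rwa [h3]
        exact h1.mul_left _
    have hfact : k1*d - k2*derivative d = π^(e+1) * (k1*u - π^m*(w*t)) := by
      rw [hDd, hdu, hk2w]; ring
    have hL : π^(e+2) ∣ π^(e+1) * (b*b'*(n*(k1*u - π^m*(w*t)))) := by
      have h1 := hB ▸ hR
      rw [hfact] at h1
      have h2 : b * b' * (n * (π ^ (e + 1) * (k1 * u - π ^ m * (w * t)))) =
          π^(e+1) * (b*b'*(n*(k1*u - π^m*(w*t)))) := by ring
      rwa [h2] at h1
    have hcore : π ∣ b*b'*(n*(k1*u - π^m*(w*t))) := by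
      have h2 : π^(e+1) * π^1 ∣ π^(e+1) * (b*b'*(n*(k1*u - π^m*(w*t)))) := by
        rw [← pow_add]; exact hL
      simpa using (mul_dvd_mul_iff_left (pow_ne_zero (e+1) hπ.ne_zero)).mp h2
    have hkey : π ∣ k1*u - π^m*(w*t) := by
      rcases hπ.dvd_mul.mp hcore with h2 | h2
      · rcases hπ.dvd_mul.mp h2 with h3 | h3
        · exact absurd h3 hπb
        · exact absurd h3 hπb'
      · rcases hπ.dvd_mul.mp h2 with h3 | h3
        · exact absurd h3 hn
        · exact h3
    cases m with
    | succ m' =>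
      have h3 : π ∣ k1*u := by
        have h4 := dvd_add hkey (((dvd_pow_self π (Nat.succ_ne_zero m')).mul_right (w*t)))
        simpa using h4
      rcases hπ.dvd_mul.mp h3 with h4 | h4
      · exact hπk1 h4
      · exact hu h4
    | zero =>
      rw [pow_zero, one_mul] at hkey
      rw [zero_add, pow_one] at hk2w
      -- π ∣ k1*u - w*t  ⇒ π ∣ u*(k1 - (e+1)·D k2)
      have h5 : π ∣ u*(k1 - ((e+1 : ℕ) : E[X]) * derivative k2) := by
        have heq : u*(k1 - ((e+1 : ℕ) : E[X]) * derivative k2) =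
            (k1*u - w*t) + π*(w*derivative u - ((e+1 : ℕ) : E[X])*(u*derivative w)) := by
          rw [hk2w, derivative_mul, ht_def]; ring
        rw [heq]
        exact dvd_add hkey (dvd_mul_right _ _)
      have h6 : π ∣ k1 - ((e+1 : ℕ) : E[X]) * derivative k2 := by
        rcases hπ.dvd_mul.mp h5 with h7 | h7
        · exact absurd h7 hu
        · exact h7
      have h8 := hdr (e+1 : ℕ)
      have h9 : (((e+1 : ℕ) : ℤ) : E[X]) = ((e+1 : ℕ) : E[X]) := by push_cast; ring
      rw [h9] at h8
      exact hπ.not_unit (h8.isUnit_of_dvd' hk2π h6)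
  · -- case π ∤ k2
    have hA : b*b'*(k2*(n*derivative d)) = b*b'*(k2*(derivative n * d)) + b*b'*(k1*n*d) - C*d^2 := by
      linear_combination -hstar
    have hknt : ¬ π ∣ k2*(n*t) := by
      intro h
      rcases hπ.dvd_mul.mp h with h2 | h2
      · exact hk2π h2
      · rcases hπ.dvd_mul.mp h2 with h3 | h3
        · exact hn h3
        · exact ht h3
    have stepA : ∀ j : ℕ, π^(e+1+j) ∣ b*b'*(k2*(derivative n * d)) →
        π^(e+1+j) ∣ b*b'*(k1*n*d) → π^(e+1+j) ∣ C*d^2 → π^(j+1) ∣ b*b' := by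
      intro j h1 h2 h3
      have h0 : π^(e+1+j) ∣ b*b'*(k2*(n*derivative d)) := by
        rw [hA]; exact dvd_sub (h1.add h2) h3
      rw [hDd] at h0
      have h0' : π^(e+1+j) ∣ π^e * (b*b'*(k2*(n*t))) := by
        have heq : b*b'*(k2*(n*(π^e*t))) = π^e * (b*b'*(k2*(n*t))) := by ring
        rwa [heq] at h0
      have h0'' : π^e * π^(j+1) ∣ π^e * (b*b'*(k2*(n*t))) := by
        rw [← pow_add]
        have : e + (j+1) = e+1+j := by omega
        rwa [this]
      have hbb := (mul_dvd_mul_iff_left (pow_ne_zero e hπ.ne_zero)).mp h0''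
      exact hπ.pow_dvd_of_dvd_mul_right _ hknt hbb
    have hd2 : π^(e+1) ∣ d^2 := hdvd_d.trans (dvd_pow_self d two_ne_zero)
    have s1 : π ∣ b*b' := by
      have := stepA 0 (by simpa using (hdvd_d.mul_left (Polynomial.derivative n)).mul_left (b*b'*k2) |>.trans (dvd_of_eq (by ring)))
        (by simpa using (hdvd_d.mul_left (k1*n)).mul_left (b*b') |>.trans (dvd_of_eq (by ring)))
        (by simpa using hd2.mul_left C)
      simpa using this
    have hterm1 : π^(e+1) ∣ k2*(derivative n * d) := (hdvd_d.mul_left (derivative n)).mul_left k2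
    have hterm2 : π^(e+1) ∣ k1*n*d := hdvd_d.mul_left (k1*n)
    have hd2' : π^(e+2) ∣ d^2 := by
      calc π^(e+2) ∣ π^(2*(e+1)) := pow_dvd_pow π (by omega)
      _ ∣ d^2 := by rw [mul_comm 2 (e+1), pow_mul]; exact pow_dvd_pow_of_dvd hdvd_d 2
    have s2 : π^2 ∣ b*b' := by
      have := stepA 1
        (by rw [show e+1+1 = 1 + (e+1) from by omega, pow_add, pow_one]
            exact mul_dvd_mul s1 hterm1)
        (by rw [show e+1+1 = 1 + (e+1) from by omega, pow_add, pow_one]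
            exact mul_dvd_mul s1 hterm2)
        (by rw [show e+1+1 = e+2 from by omega]
            exact hd2'.mul_left C)
      simpa using this
    have hπb : π ∣ b := by
      by_contra h
      exact sq_not_dvd hb' hπ (hπ.pow_dvd_of_dvd_mul_left 2 h s2)
    have hπb' : π ∣ b' := by
      by_contra h
      exact sq_not_dvd hb hπ (hπ.pow_dvd_of_dvd_mul_right 2 h s2)
    have hπC := hCd π hπ hπb hπb'
    have s3 : π^3 ∣ b*b' := by
      have := stepA 2
        (by rw [show e+1+2 = 2 + (e+1) from by omega, pow_add]
            exact mul_dvd_mul s2 hterm1)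
        (by rw [show e+1+2 = 2 + (e+1) from by omega, pow_add]
            exact mul_dvd_mul s2 hterm2)
        (by rw [show e+1+2 = 1 + (e+2) from by omega, pow_add, pow_one]
            exact mul_dvd_mul hπC hd2')
      exact this
    obtain ⟨b0, hb0⟩ := hπb
    have hπb0 : ¬ π ∣ b0 := by
      intro h
      exact sq_not_dvd hb hπ (by rw [hb0, pow_two]; exact mul_dvd_mul_left π h)
    have h4 : π^2 ∣ b0 * b' := by
      rw [hb0] at s3
      have h5 : π * π^2 ∣ π * (b0*b') := by
        have heq : π * b0 * b' = π * (b0*b') := by ring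
        have heq2 : π^3 = π * π^2 := by ring
        rw [← heq, ← heq2]
        exact s3
      exact (mul_dvd_mul_iff_left hπ.ne_zero).mp h5
    exact sq_not_dvd hb' hπ (hπ.pow_dvd_of_dvd_mul_left 2 hπb0 h4)


end Aux

set_option maxHeartbeats 1000000 in
theorem stmt_12 {E : Type*} [Field E] [CharZero E] (k1 k2 : E[X]) (hk1 : k1 ≠ 0)
    (hk2 : k2 ≠ 0) (hcop : IsCoprime k1 k2) (hdr : DiffReduced k1 k2)
    (N : Submodule E E[X])
    (hNmono : ∃ S : Set ℕ, N = Submodule.span E ((fun n => (X : E[X]) ^ n) '' S))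
    (hcompl : IsCompl (MK k1 k2) N)
    (f r r' : RatFunc E)
    (q b v : E[X]) (hb : Squarefree b) (hbk : IsCoprime b k2)
    (hdeg : q.degree < b.degree) (hv : v ∈ N)
    (hr : r = algebraMap E[X] (RatFunc E) q / algebraMap E[X] (RatFunc E) b +
      algebraMap E[X] (RatFunc E) v / algebraMap E[X] (RatFunc E) k2)
    (q' b' v' : E[X]) (hb' : Squarefree b') (hbk' : IsCoprime b' k2)
    (hdeg' : q'.degree < b'.degree) (hv' : v' ∈ N)
    (hr' : r' = algebraMap E[X] (RatFunc E) q' / algebraMap E[X] (RatFunc E) b' +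
      algebraMap E[X] (RatFunc E) v' / algebraMap E[X] (RatFunc E) k2)
    (hg : ∃ g : RatFunc E,
      f = Dr g + (algebraMap E[X] (RatFunc E) k1 / algebraMap E[X] (RatFunc E) k2) * g + r)
    (hg' : ∃ g' : RatFunc E,
      f = Dr g' + (algebraMap E[X] (RatFunc E) k1 / algebraMap E[X] (RatFunc E) k2) * g' + r') :
    r = r' := by
  obtain ⟨g, hgeq⟩ := hg
  obtain ⟨g', hgeq'⟩ := hg'
  have hbne : b ≠ 0 := by rintro rfl; simp only [degree_zero] at hdeg; exact not_lt_bot hdeg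
  have hbne' : b' ≠ 0 := by rintro rfl; simp only [degree_zero] at hdeg'; exact not_lt_bot hdeg'
  set h : RatFunc E := g' - g with hh
  set n : E[X] := h.num with hn
  set d : E[X] := h.denom with hd
  have hd0 : d ≠ 0 := h.denom_ne_zero
  have hιd : algebraMap E[X] (RatFunc E) d ≠ 0 := RatFunc.algebraMap_ne_zero hd0
  have hιb : algebraMap E[X] (RatFunc E) b ≠ 0 := RatFunc.algebraMap_ne_zero hbne
  have hιb' : algebraMap E[X] (RatFunc E) b' ≠ 0 := RatFunc.algebraMap_ne_zero hbne'
  have hιk2 : algebraMap E[X] (RatFunc E) k2 ≠ 0 := RatFunc.algebraMap_ne_zero hk2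
  have hsum : Dr g + (algebraMap E[X] (RatFunc E) k1 / algebraMap E[X] (RatFunc E) k2) * g + r
      = Dr g' + (algebraMap E[X] (RatFunc E) k1 / algebraMap E[X] (RatFunc E) k2) * g' + r' :=
    hgeq.symm.trans hgeq'
  have hDr' : Dr g' = Dr g + Dr h := by
    rw [← dr_add]; congr 1; rw [hh]; ring
  have key : Dr h + (algebraMap E[X] (RatFunc E) k1 / algebraMap E[X] (RatFunc E) k2) * h
      = r - r' := by
    rw [hh]
    linear_combination (-1 : RatFunc E) * hsum - hDr'
  rw [dr_def h, hr, hr'] at key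
  have ex : algebraMap E[X] (RatFunc E) n = h * algebraMap E[X] (RatFunc E) d :=
    (div_eq_iff hιd).mp h.num_div_denom
  rw [← hn, ← hd] at key
  field_simp at key
  have hstar : b*b'*(k2*(derivative n * d - n * derivative d) + k1*n*d)
      = ((q*b' - q'*b)*k2 + (v-v')*(b*b'))*d^2 := by
    have h2 : (b*b'*(k2*(derivative n * d - n * derivative d) + k1*n*d)) * k2^2
        = (((q*b' - q'*b)*k2 + (v-v')*(b*b'))*d^2) * k2^2 := by
      apply RatFunc.algebraMap_injective E
      simp only [map_mul, map_add, map_sub, map_pow]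
      linear_combination (algebraMap E[X] (RatFunc E) k2)^2 * key + (algebraMap E[X] (RatFunc E) b * algebraMap E[X] (RatFunc E) b' *
        algebraMap E[X] (RatFunc E) k2 ^ 2 * algebraMap E[X] (RatFunc E) k1 *
        algebraMap E[X] (RatFunc E) d) * ex
    exact mul_right_cancel₀ (pow_ne_zero 2 hk2) h2
  have hCd : ∀ π : E[X], Prime π → π ∣ b → π ∣ b' →
      π ∣ (q*b' - q'*b)*k2 + (v-v')*(b*b') := by
    intro π hπ h1 h2
    exact dvd_add ((dvd_sub (h2.mul_left q) (h1.mul_left q')).mul_right k2)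
      ((h1.mul_right b').mul_left (v-v'))
  have hd1 : d = 1 := by
    have hmon : d.Monic := h.monic_denom
    by_contra hne
    have hnotunit : ¬ IsUnit d := fun hu => hne (hmon.eq_one_of_isUnit hu)
    obtain ⟨π, hirr, hdvd⟩ := WfDvdMonoid.exists_irreducible_factor hnotunit hd0
    exact key_no_factor hk2 hcop hdr hb hb' hbk hbk' (h.isCoprime_num_denom) hd0 hCd hstar
      (UniqueFactorizationMonoid.irreducible_iff_prime.mp hirr) hdvd
  rw [hd1] at hstar
  simp only [derivative_one, mul_one, mul_zero, sub_zero, one_pow] at hstar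
  -- hstar : b*b'*(k2*(derivative n) + k1*n) = (q*b' - q'*b)*k2 + (v-v')*(b*b')
  have hdvd : (b*b') ∣ (q*b' - q'*b)*k2 :=
    ⟨k2*derivative n + k1*n - (v-v'), by linear_combination -hstar⟩
  have hcpbb : IsCoprime (b*b') k2 := hbk.mul_left hbk'
  have hdvd2 : (b*b') ∣ (q*b' - q'*b) := hcpbb.dvd_of_dvd_mul_right hdvd
  have hqq : q*b' - q'*b = 0 := by
    by_contra hne
    have hdegle := degree_le_of_dvd hdvd2 hne
    have hlt : (q*b' - q'*b).degree < (b*b').degree := by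
      rw [degree_mul]
      refine lt_of_le_of_lt (degree_sub_le _ _) (max_lt ?_ ?_)
      · rw [degree_mul]
        exact WithBot.add_lt_add_right (fun hbot => hbne' (degree_eq_bot.mp hbot)) hdeg
      · rw [degree_mul, add_comm b.degree b'.degree]
        exact WithBot.add_lt_add_right (fun hbot => hbne (degree_eq_bot.mp hbot)) hdeg'
    exact absurd hdegle (not_le.mpr hlt)
  have hbb0 : b * b' ≠ 0 := mul_ne_zero hbne hbne'
  have hMv : v - v' = k2*derivative n + k1*n := by
    have h0 : (k2*derivative n + k1*n - (v-v'))*(b*b') = 0 := by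
      linear_combination hstar + k2 * hqq
    rcases mul_eq_zero.mp h0 with h1 | h1
    · exact (sub_eq_zero.mp h1).symm
    · exact absurd h1 hbb0
  have hMK : v - v' ∈ MK k1 k2 := by
    refine ⟨n, ?_⟩
    simp only [LinearMap.add_apply, LinearMap.comp_apply, LinearMap.mulLeft_apply]
    exact hMv.symm
  have hNm : v - v' ∈ N := N.sub_mem hv hv'
  have hvv : v = v' := by
    have h0 : v - v' = 0 := Submodule.disjoint_def.mp hcompl.disjoint _ hMK hNm
    exact sub_eq_zero.mp h0
  rw [hr, hr', hvv]
  congr 1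
  rw [div_eq_div_iff hιb hιb', ← map_mul, ← map_mul]
  exact congrArg _ (sub_eq_zero.mp hqq)
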